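/- (Value of the CCMF dual function.) Let A be a matrix in Matrix E V ℝ with E, V finite, let c : E → ℝ, g : V → ℝ, λ : V → ℝ, ν : V → ℝ, and assume (|A|λ)_e > 0 for every edge e. Define F* : E → ℝ by F*_e = (c + Aν)_e / (2 (|A|λ)_e). Then (c + Aν)ᵀF* − λᵀ(|Aᵀ|F*² − g²) = λᵀg² + (1/4) Σ_{e ∈ E} (c + Aν)_e² / (|A|λ)_e. -/

import Mathlib

open Matrix BigOperators

/-- Value of the CCMF dual function: evaluating the Lagrangian
`(c + Aν)ᵀF − λᵀ(|Aᵀ|F² − g²)` at the stationary flow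
`F*_e = (c + Aν)_e / (2 (|A|λ)_e)` yields
`λᵀg² + (1/4) Σ_e (c + Aν)_e² / (|A|λ)_e`. -/
theorem stmt_5 {E V : Type*} [Fintype E] [Fintype V] [Nonempty E] [Nonempty V]
    (A : Matrix E V ℝ) (c : E → ℝ) (g : V → ℝ) (lam : V → ℝ) (ν : V → ℝ)
    (hpos : ∀ e : E, 0 < ∑ i, |A e i| * lam i)
    (Fstar : E → ℝ)
    (hFstar : ∀ e : E, Fstar e = (c e + (A *ᵥ ν) e) / (2 * ∑ i, |A e i| * lam i)) :
    ∑ e, (c e + (A *ᵥ ν) e) * Fstar e -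
        ∑ i, lam i * ((∑ e, |A e i| * (Fstar e) ^ 2) - (g i) ^ 2) =
      ∑ i, lam i * (g i) ^ 2 +
        (1 / 4) * ∑ e, (c e + (A *ᵥ ν) e) ^ 2 / (∑ i, |A e i| * lam i) := by
  set b : E → ℝ := fun e => c e + (A *ᵥ ν) e with hb
  set s : E → ℝ := fun e => ∑ i, |A e i| * lam i with hs
  have hsne : ∀ e, s e ≠ 0 := fun e => (hpos e).ne'
  have h1 : ∀ e, b e * Fstar e = b e ^ 2 / (2 * s e) := by
    intro e; rw [hFstar e]; field_simp; ring
  have h2 : (∑ i, lam i * ((∑ e, |A e i| * (Fstar e) ^ 2) - (g i) ^ 2))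
      = (∑ e, s e * (Fstar e) ^ 2) - ∑ i, lam i * (g i) ^ 2 := by
    simp only [mul_sub, Finset.sum_sub_distrib, Finset.mul_sum]
    rw [Finset.sum_comm]
    congr 1
    refine Finset.sum_congr rfl fun e _ => ?_
    rw [hs, Finset.sum_mul]
    exact Finset.sum_congr rfl fun i _ => by ring
  have h3 : ∀ e, s e * (Fstar e) ^ 2 = b e ^ 2 / (4 * s e) := by
    intro e; rw [hFstar e]; simp only [hs, hb]; field_simp [(hpos e).ne']; ring
  change ∑ e, b e * Fstar e - _ = _ + 1 / 4 * ∑ e, b e ^ 2 / s e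
  simp only [h2, Finset.sum_congr rfl (fun e _ => h1 e),
    Finset.sum_congr rfl (fun e _ => h3 e)]
  rw [Finset.mul_sum]
  have key : ∑ e : E, b e ^ 2 / (2 * s e) - ∑ e : E, b e ^ 2 / (4 * s e)
      = ∑ e : E, 1 / 4 * (b e ^ 2 / s e) := by
    rw [← Finset.sum_sub_distrib]
    refine Finset.sum_congr rfl fun e _ => ?_
    field_simp
    ring
  linarith [key]
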